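/- Let γ ∈ (0,1) and let h : (0,∞) → ℝ be a concave function satisfying the scaling relation h(y/γ²) = h(y)/γ for all y > 0. Then h(y) ≥ 0 for every y > 0. -/

import Mathlib

/-- If `h` is concave on `(0,∞)` and satisfies the scaling relation `h (y/γ²) = h y / γ`
for all `y > 0`, where `γ ∈ (0,1)`, then `h` is nonnegative on `(0,∞)`. -/
theorem concave_scaling_nonneg (γ : ℝ) (hγ : γ ∈ Set.Ioo (0:ℝ) 1) (h : ℝ → ℝ)
    (hconc : ConcaveOn ℝ (Set.Ioi 0) h)
    (hscale : ∀ y > (0:ℝ), h (y / γ ^ 2) = h y / γ) :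
    ∀ y > (0:ℝ), 0 ≤ h y := by
  obtain ⟨hγ0, hγ1⟩ := hγ
  intro y hy
  by_contra hz
  push_neg at hz
  have hγ2 : (0:ℝ) < γ ^ 2 := by positivity
  have hy2 : (0:ℝ) < y / γ ^ 2 := by positivity
  have h1 : h (y / γ ^ 2) = h y / γ := hscale y hy
  have h2 : h (y / γ ^ 2 / γ ^ 2) = h y / γ / γ := by
    rw [hscale (y / γ ^ 2) hy2, h1]
  have hd : (0:ℝ) < 1 + γ ^ 2 := by positivity
  have ha : (0:ℝ) ≤ 1 / (1 + γ ^ 2) := by positivity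
  have hb : (0:ℝ) ≤ γ ^ 2 / (1 + γ ^ 2) := by positivity
  have hab : 1 / (1 + γ ^ 2) + γ ^ 2 / (1 + γ ^ 2) = (1:ℝ) := by field_simp
  have key := hconc.2 (Set.mem_Ioi.mpr hy)
    (Set.mem_Ioi.mpr (by positivity : (0:ℝ) < y / γ ^ 2 / γ ^ 2)) ha hb hab
  have hcomb : (1 / (1 + γ ^ 2)) • y + (γ ^ 2 / (1 + γ ^ 2)) • (y / γ ^ 2 / γ ^ 2)
      = y / γ ^ 2 := by
    rw [smul_eq_mul, smul_eq_mul]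
    field_simp
    ring
  rw [hcomb, h1, h2] at key
  simp only [smul_eq_mul] at key
  -- key : 1/(1+γ²) * h y + γ²/(1+γ²) * (h y / γ / γ) ≤ h y / γ
  have hne : γ ≠ 0 := ne_of_gt hγ0
  have key' : 2 * h y / (1 + γ ^ 2) ≤ h y / γ := by
    have : 1 / (1 + γ ^ 2) * h y + γ ^ 2 / (1 + γ ^ 2) * (h y / γ / γ)
        = 2 * h y / (1 + γ ^ 2) := by field_simp; ring
    linarith [this ▸ key]
  have hamgm : 2 * γ < 1 + γ ^ 2 := by nlinarith [sq_nonneg (1 - γ)]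
  rw [div_le_div_iff₀ hd hγ0] at key'
  nlinarith
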